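/- Let p, q ≥ 0 with n = p + q ≥ 1, and let E be the diagonal n×n matrix whose first p diagonal entries are +1 and whose last q diagonal entries are −1. Suppose X is an n×n complex matrix with X * E * Xᴴ = E (i.e. X ∈ U(p,q)), and suppose X = B * R where B is positive-definite Hermitian and R is unitary (the polar decomposition of X). Then both polar factors lie in U(p,q): B * E * Bᴴ = E and R * E * Rᴴ = E. -/

import Mathlib

open Matrix ComplexOrder in
/-- The polar factors of an element of `U(p,q)` again lie in `U(p,q)`. -/
theorem polar_factors_in_Upq (p q : ℕ) (hn : 1 ≤ p + q)
    (E : Matrix (Fin (p + q)) (Fin (p + q)) ℂ)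
    (hE : E = Matrix.diagonal (fun i : Fin (p + q) => if (i : ℕ) < p then (1 : ℂ) else -1))
    (X B R : Matrix (Fin (p + q)) (Fin (p + q)) ℂ)
    (hX : X * E * Xᴴ = E)
    (hB : B.IsHermitian ∧ B.PosDef)
    (hR : R * Rᴴ = 1)
    (hXBR : X = B * R) :
    B * E * Bᴴ = E ∧ R * E * Rᴴ = E := by
  obtain ⟨hBH, hBpd⟩ := hB
  -- basic facts about E
  have hEH : Eᴴ = E := by
    subst hE
    rw [Matrix.diagonal_conjTranspose]
    refine congrArg Matrix.diagonal ?_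
    funext i
    simp only [Pi.star_apply]
    split <;> simp
  have hEE : E * E = 1 := by
    subst hE
    rw [Matrix.diagonal_mul_diagonal]
    have : (fun i : Fin (p + q) =>
        (if (i : ℕ) < p then (1 : ℂ) else -1) * (if (i : ℕ) < p then (1 : ℂ) else -1)) =
        fun _ => (1 : ℂ) := by
      funext i; split <;> norm_num
    rw [this, Matrix.diagonal_one]
  -- Xᴴ * E * X = E
  have hX1 : X * (E * Xᴴ * E) = 1 := by
    calc X * (E * Xᴴ * E) = (X * E * Xᴴ) * E := by noncomm_ring
    _ = 1 := by rw [hX, hEE]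
  have hX2 : (E * Xᴴ * E) * X = 1 := mul_eq_one_comm.mp hX1
  have hX3 : Xᴴ * E * X = E := by
    calc Xᴴ * E * X = (E * E) * (Xᴴ * E * X) := by rw [hEE, one_mul]
    _ = E * (E * Xᴴ * E * X) := by noncomm_ring
    _ = E := by rw [hX2, mul_one]
  -- X * Xᴴ = B * B
  have hXXH : X * Xᴴ = B * B := by
    rw [hXBR, Matrix.conjTranspose_mul]
    calc B * R * (Rᴴ * Bᴴ) = B * (R * Rᴴ) * Bᴴ := by noncomm_ring
    _ = B * B := by rw [hR, Matrix.mul_one, hBH.eq]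
  -- (B*B) * E * (B*B) = E
  have hS : (B * B) * E * (B * B) = E := by
    calc (B * B) * E * (B * B) = X * (Xᴴ * E * X) * Xᴴ := by rw [← hXXH]; noncomm_ring
    _ = E := by rw [hX3, hX]
  -- B is invertible
  have hBdet : IsUnit B.det := isUnit_iff_ne_zero.mpr hBpd.det_pos.ne'
  have hBi := B.invertibleOfIsUnitDet hBdet
  -- E * B * B * E = (B*B)⁻¹
  have hinv : (B * B) * (E * (B * B) * E) = 1 := by
    calc (B * B) * (E * (B * B) * E) = ((B * B) * E * (B * B)) * E := by noncomm_ring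
    _ = 1 := by rw [hS, hEE]
  have hBBinv : (B * B)⁻¹ = E * (B * B) * E :=
    Matrix.inv_eq_right_inv hinv
  -- E * B * E is posSemidef with square (B⁻¹)^2
  have hC : (E * B * E).PosSemidef := by
    have := hBpd.posSemidef.conjTranspose_mul_mul_same E
    rwa [hEH] at this
  have hCsq : (E * B * E) ^ 2 = (B⁻¹) ^ 2 := by
    rw [pow_two, pow_two, ← Matrix.mul_inv_rev]
    calc E * B * E * (E * B * E) = E * B * (E * E) * B * E := by noncomm_ring
    _ = E * (B * B) * E := by rw [hEE]; noncomm_ring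
    _ = (B * B)⁻¹ := hBBinv.symm
  have hBinv : (B⁻¹).PosSemidef := hBpd.inv.posSemidef
  have hEBE : E * B * E = B⁻¹ := by
    open scoped MatrixOrder in
    exact (CFC.sq_eq_sq_iff _ _ hC.nonneg hBinv.nonneg).mp hCsq
  -- conclude B * E * B = E
  have hBEB : B * E * Bᴴ = E := by
    rw [hBH.eq]
    have h1 : B * (E * B * E) = 1 := by rw [hEBE, Matrix.mul_nonsing_inv _ hBdet]
    calc B * E * B = (B * (E * B * E)) * E := by
          rw [Matrix.mul_assoc, Matrix.mul_assoc, Matrix.mul_assoc, Matrix.mul_assoc, hEE,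
            Matrix.mul_one]
    _ = E := by rw [h1, one_mul]
  refine ⟨hBEB, ?_⟩
  -- cancel B from B * (R * E * Rᴴ) * Bᴴ = E = B * E * Bᴴ
  have key : B * ((R * E * Rᴴ) * Bᴴ) = B * (E * Bᴴ) := by
    calc B * ((R * E * Rᴴ) * Bᴴ) = (B * R) * E * (B * R)ᴴ := by
          rw [Matrix.conjTranspose_mul]; noncomm_ring
    _ = E := by rw [← hXBR, hX]
    _ = B * (E * Bᴴ) := by rw [← Matrix.mul_assoc, hBEB]
  have hBHi : Invertible Bᴴ := B.invertibleConjTranspose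
  have key2 : (R * E * Rᴴ) * Bᴴ = E * Bᴴ :=
    Matrix.mul_right_injective_of_invertible B key
  exact Matrix.mul_left_injective_of_invertible Bᴴ key2
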